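/- (Lemma 3) Let each f_{n,i} be differentiable, μ-strongly convex, with L-Lipschitz gradient, and let the weight matrices satisfy Assumption 1. Fix x, v ∈ ℝ^{Np} and a gradient table y, and for each joint index i define x⁺(i) = x − α ĝ(i) − (I − Z̃)x − U v and v⁺(i) = v + U x⁺(i); write u = (x; v), u⁺(i) = (x⁺(i); v⁺(i)), u* = (x*; v*). Then for any η > 0, E_i[‖u⁺(i) − u*‖²_G] ≤ ‖u − u*‖²_G − 2 E_i[‖x⁺(i) − x*‖²_{I+Z−2Z̃}] + (4αL/η) p(y) − E_i[‖x⁺(i) − x‖²_{Z̃ − 2αη I}] − E_i[‖v⁺(i) − v‖²] − (4αμ/L − 2α(2L−μ)/η) [f(x) − f(x*) − ⟨∇f(x*), x − x*⟩], where E_i denotes the uniform average over joint indices i ∈ ∏_n {1,…,q_n}. -/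

import Mathlib

open Finset
open scoped RealInnerProductSpace

noncomputable section

/-- Block vectors of `ℝ^{Np}`: one vector of `ℝᵖ` per node. -/
abbrev Evec (p : ℕ) := EuclideanSpace ℝ (Fin p)

/-- The local objective of node `n`: `f_n(w) = (1/q_n) ∑_i f_{n,i}(w)`. -/
def locf {N p : ℕ} {q : Fin N → ℕ}
    (f : (n : Fin N) → Fin (q n) → Evec p → ℝ) (n : Fin N) (w : Evec p) : ℝ :=
  (q n : ℝ)⁻¹ * ∑ i, f n i w

/-- The local stochastic averaging gradient of node `n` for index choice `j`:
`ĝ_n(j) = ∇f_{n,j}(x_n) − ∇f_{n,j}(y_{n,j}) + (1/q_n) ∑_i ∇f_{n,i}(y_{n,i})`. -/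
def hatg {N p : ℕ} {q : Fin N → ℕ}
    (f : (n : Fin N) → Fin (q n) → Evec p → ℝ)
    (x : Fin N → Evec p)
    (y : (n : Fin N) → Fin (q n) → Evec p)
    (n : Fin N) (j : Fin (q n)) : Evec p :=
  gradient (f n j) (x n) - gradient (f n j) (y n j)
    + (q n : ℝ)⁻¹ • ∑ i, gradient (f n i) (y n i)

/-- `p(y) = ∑_n (1/q_n) ∑_i [f_{n,i}(y_{n,i}) − f_{n,i}(x̃*) − ⟨∇f_{n,i}(x̃*), y_{n,i} − x̃*⟩]`. -/
def ptbl {N p : ℕ} {q : Fin N → ℕ}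
    (f : (n : Fin N) → Fin (q n) → Evec p → ℝ)
    (xstar : Evec p)
    (y : (n : Fin N) → Fin (q n) → Evec p) : ℝ :=
  ∑ n, (q n : ℝ)⁻¹ * ∑ i,
    (f n i (y n i) - f n i xstar - ⟪gradient (f n i) xstar, y n i - xstar⟫)

/-- The aggregate optimality gap `f(x) − f(x*) − ⟨∇f(x*), x − x*⟩`, written blockwise. -/
def optgap {N p : ℕ} {q : Fin N → ℕ}
    (f : (n : Fin N) → Fin (q n) → Evec p → ℝ)
    (xstar : Evec p) (x : Fin N → Evec p) : ℝ :=
  ∑ n, (locf f n (x n) - locf f n xstar - ⟪gradient (locf f n) xstar, x n - xstar⟫)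

/-- The quadratic form `aᵀ (M ⊗ I_p) a` of an extended weight matrix, written blockwise. -/
def quadForm {N p : ℕ} (M : Matrix (Fin N) (Fin N) ℝ) (a : Fin N → Evec p) : ℝ :=
  ∑ n, ⟪a n, ∑ m, M n m • a m⟫

/-- The squared Euclidean norm of a block vector of `ℝ^{Np}`. -/
def sqnormB {N p : ℕ} (a : Fin N → Evec p) : ℝ := ∑ n, ‖a n‖^2

/-- The gradient table obtained from `y` by replacing, at each node `n`, the entry
`i n` by the current iterate `x n`. -/
def tblUpd {N p : ℕ} {q : Fin N → ℕ}
    (x : Fin N → Evec p)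
    (y : (n : Fin N) → Fin (q n) → Evec p)
    (i : (n : Fin N) → Fin (q n)) : (n : Fin N) → Fin (q n) → Evec p :=
  fun n => Function.update (y n) (i n) (x n)

end


-- ===================== Auxiliary lemmas =====================
noncomputable section AuxConvex
variable {E : Type*} [NormedAddCommGroup E] [InnerProductSpace ℝ E] [CompleteSpace E]

lemma inner_line_hasDerivAt (g : E → ℝ) (hg : Differentiable ℝ g) (a v : E) (t : ℝ) :
    HasDerivAt (fun s : ℝ => g (a + s • v)) ⟪gradient g (a + t • v), v⟫ t := by
  have h1 : HasDerivAt (fun s : ℝ => a + s • v) v t := by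
    simpa using ((hasDerivAt_id t).smul_const v).const_add a
  have h3 : HasFDerivAt g (InnerProductSpace.toDual ℝ E (gradient g (a + t • v))) (a + t • v) :=
    hasGradientAt_iff_hasFDerivAt.mp (hg _).hasGradientAt
  have h4 := h3.comp_hasDerivAt t h1
  rw [InnerProductSpace.toDual_apply_apply] at h4
  exact h4

lemma grad_le_of_convex (g : E → ℝ) (hg : Differentiable ℝ g)
    (hc : ConvexOn ℝ Set.univ g) (a b : E) :
    ⟪gradient g a, b - a⟫ ≤ g b - g a := by
  have hconv : ConvexOn ℝ Set.univ (fun t : ℝ => g (a + t • (b - a))) := by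
    have := hc.comp_affineMap (AffineMap.lineMap a b)
    have he : (fun t : ℝ => g (a + t • (b - a))) = g ∘ (AffineMap.lineMap a b) := by
      funext t
      simp [AffineMap.lineMap_apply, Function.comp]
      congr 1
      abel
    rw [he]
    simpa using this
  have hder : HasDerivAt (fun t : ℝ => g (a + t • (b - a))) ⟪gradient g a, b - a⟫ 0 := by
    simpa using inner_line_hasDerivAt g hg a (b - a) 0
  have h := hconv.le_slope_of_hasDerivAt (Set.mem_univ (0:ℝ)) (Set.mem_univ 1) one_pos hder
  simp [slope_def_field] at h
  simpa using h

lemma descent_lemma (g : E → ℝ) (hg : Differentiable ℝ g) (L : ℝ) (hL : 0 ≤ L)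
    (hlip : ∀ a b, ‖gradient g a - gradient g b‖ ≤ L * ‖a - b‖) (a b : E) :
    g b ≤ g a + ⟪gradient g a, b - a⟫ + L / 2 * ‖b - a‖ ^ 2 := by
  set v := b - a with hv
  set ψ := fun t : ℝ => g (a + t • v) - t * ⟪gradient g a, v⟫ - L * t ^ 2 / 2 * ‖v‖ ^ 2 with hψ
  have hψd : ∀ t : ℝ, HasDerivAt ψ
      (⟪gradient g (a + t • v), v⟫ - ⟪gradient g a, v⟫ - L * t * ‖v‖ ^ 2) t := by
    intro t
    have h1 := inner_line_hasDerivAt g hg a v t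
    have h2 : HasDerivAt (fun t : ℝ => t * ⟪gradient g a, v⟫) ⟪gradient g a, v⟫ t := by
      simpa using (hasDerivAt_id t).mul_const ⟪gradient g a, v⟫
    have h3 : HasDerivAt (fun t : ℝ => L * t ^ 2 / 2 * ‖v‖ ^ 2) (L * t * ‖v‖ ^ 2) t := by
      have : HasDerivAt (fun t : ℝ => t ^ 2) (2 * t) t := by
        simpa using hasDerivAt_pow 2 t
      have := ((this.const_mul L).div_const 2).mul_const (‖v‖ ^ 2)
      exact this.congr_deriv (by ring)
    exact (h1.sub h2).sub h3
  have hanti : AntitoneOn ψ (Set.Icc (0:ℝ) 1) := by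
    apply antitoneOn_of_deriv_nonpos (convex_Icc 0 1)
    · exact fun t _ => ((hψd t).continuousAt).continuousWithinAt
    · intro t ht
      exact ((hψd t).differentiableAt).differentiableWithinAt
    · intro t ht
      rw [interior_Icc] at ht
      rw [(hψd t).deriv]
      have hb1 : ⟪gradient g (a + t • v) - gradient g a, v⟫ ≤ L * t * ‖v‖ ^ 2 := by
        calc ⟪gradient g (a + t • v) - gradient g a, v⟫
            ≤ ‖gradient g (a + t • v) - gradient g a‖ * ‖v‖ := real_inner_le_norm _ _
          _ ≤ (L * ‖(a + t • v) - a‖) * ‖v‖ := by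
              apply mul_le_mul_of_nonneg_right (hlip _ _) (norm_nonneg _)
          _ = L * t * ‖v‖ ^ 2 := by
              have : ‖(a + t • v) - a‖ = t * ‖v‖ := by
                simp [norm_smul, abs_of_nonneg ht.1.le]
              rw [this]; ring
      have := inner_sub_left (𝕜 := ℝ) (gradient g (a + t • v)) (gradient g a) v
      linarith [this ▸ hb1]
  have h01 := hanti (Set.mem_Icc.mpr ⟨le_refl 0, zero_le_one⟩)
      (Set.mem_Icc.mpr ⟨zero_le_one, le_refl 1⟩) zero_le_one
  simp only [hψ] at h01
  have e1 : a + (1:ℝ) • v = b := by simp [hv]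
  have e0 : a + (0:ℝ) • v = a := by simp
  rw [e1, e0] at h01
  simp [-inner_gradient_left] at h01
  nlinarith [h01]

lemma cocoercivity (g : E → ℝ) (hg : Differentiable ℝ g) (hc : ConvexOn ℝ Set.univ g)
    (L : ℝ) (hL : 0 < L)
    (hlip : ∀ a b, ‖gradient g a - gradient g b‖ ≤ L * ‖a - b‖) (w z : E) :
    ‖gradient g w - gradient g z‖ ^ 2 ≤ 2 * L * (g w - g z - ⟪gradient g z, w - z⟫) := by
  set G := gradient g w - gradient g z with hG
  set w' := w - (1 / L) • G with hw'
  have h1 : ⟪gradient g z, w' - z⟫ ≤ g w' - g z := grad_le_of_convex g hg hc z w'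
  have h2 : g w' ≤ g w + ⟪gradient g w, w' - w⟫ + L / 2 * ‖w' - w‖ ^ 2 :=
    descent_lemma g hg L hL.le hlip w w'
  have hww' : w' - w = -((1 / L) • G) := by rw [hw']; abel
  have hnw : ‖w' - w‖ ^ 2 = (1 / L) ^ 2 * ‖G‖ ^ 2 := by
    rw [hww', norm_neg, norm_smul, Real.norm_eq_abs,
      abs_of_nonneg (by positivity : (0:ℝ) ≤ 1 / L), mul_pow]
  have hiw : ⟪gradient g w, w' - w⟫ = -(1 / L) * ⟪gradient g w, G⟫ := by
    rw [hww', inner_neg_right, real_inner_smul_right]; ring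
  have hiz : ⟪gradient g z, w' - z⟫ = ⟪gradient g z, w - z⟫ - (1 / L) * ⟪gradient g z, G⟫ := by
    have : w' - z = (w - z) - (1 / L) • G := by rw [hw']; abel
    rw [this, inner_sub_right, real_inner_smul_right]
  have hGG : ⟪gradient g w, G⟫ - ⟪gradient g z, G⟫ = ‖G‖ ^ 2 := by
    rw [← inner_sub_left, ← hG, real_inner_self_eq_norm_sq]
  have hGG' : (1/L) * ⟪gradient g w, G⟫ - (1/L) * ⟪gradient g z, G⟫ = (1/L) * ‖G‖ ^ 2 := by
    rw [← mul_sub, hGG]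
  rw [hiz] at h1
  rw [hiw, hnw] at h2
  have hkey : (1/L) * ‖G‖ ^ 2 - L/2 * ((1/L)^2 * ‖G‖^2) ≤ g w - g z - ⟪gradient g z, w - z⟫ := by
    linarith [h1, h2, hGG']
  have hmul := mul_le_mul_of_nonneg_left hkey (by positivity : (0:ℝ) ≤ 2*L)
  have hsimp : 2*L*((1/L) * ‖G‖ ^ 2 - L/2 * ((1/L)^2 * ‖G‖^2)) = ‖G‖^2 := by
    field_simp; ring
  rw [hsimp] at hmul
  linarith [hmul]

lemma strong_mono (g : E → ℝ) (hg : Differentiable ℝ g) (μ : ℝ)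
    (hsc : StrongConvexOn Set.univ μ g) (a b : E) :
    μ * ‖b - a‖ ^ 2 ≤ ⟪gradient g b - gradient g a, b - a⟫ := by
  have hconv : ConvexOn ℝ Set.univ (fun x => g x - μ / 2 * ‖x‖ ^ 2) :=
    strongConvexOn_iff_convex.mp hsc
  set h := fun x : E => g x - μ / 2 * ‖x‖ ^ 2 with hh
  have hq : ∀ x : E, HasGradientAt (fun x : E => μ / 2 * ‖x‖ ^ 2) (μ • x) x := by
    intro x
    rw [hasGradientAt_iff_hasFDerivAt]
    have h1 : HasFDerivAt (fun x : E => (⟪x, x⟫ : ℝ))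
        ((fderivInnerCLM ℝ (x, x)).comp <|
          (ContinuousLinearMap.id ℝ E).prod (ContinuousLinearMap.id ℝ E)) x :=
      (hasFDerivAt_id x).inner ℝ (hasFDerivAt_id x)
    have h1' : HasFDerivAt (fun x : E => ‖x‖ ^ 2)
        ((fderivInnerCLM ℝ (x, x)).comp <|
          (ContinuousLinearMap.id ℝ E).prod (ContinuousLinearMap.id ℝ E)) x := by
      have he : (fun x : E => ‖x‖ ^ 2) = fun x : E => (⟪x, x⟫ : ℝ) := by
        funext z; rw [real_inner_self_eq_norm_sq]
      rw [he]; exact h1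
    have h2 := h1'.const_mul (μ / 2)
    refine h2.congr_fderiv ?_
    ext y
    simp [InnerProductSpace.toDual_apply_apply, fderivInnerCLM_apply, real_inner_smul_left,
      real_inner_comm x y]
    ring
  have hgd : ∀ x : E, HasGradientAt h (gradient g x - μ • x) x := by
    intro x
    rw [hasGradientAt_iff_hasFDerivAt] at *
    have h1 : HasFDerivAt g (InnerProductSpace.toDual ℝ E (gradient g x)) x :=
      hasGradientAt_iff_hasFDerivAt.mp (hg x).hasGradientAt
    have h2 := hasGradientAt_iff_hasFDerivAt.mp (hq x)
    have := h1.sub h2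
    refine this.congr_fderiv ?_
    simp [map_sub]
  have hhd : Differentiable ℝ h := fun x => ((hgd x).differentiableAt)
  have hgrad : ∀ x : E, gradient h x = gradient g x - μ • x := fun x => (hgd x).gradient
  have h1 := grad_le_of_convex h hhd hconv a b
  have h2 := grad_le_of_convex h hhd hconv b a
  rw [hgrad] at h1 h2
  have e1 : ⟪gradient g a - μ • a, b - a⟫ + ⟪gradient g b - μ • b, a - b⟫ ≤ 0 := by linarith
  have e2 : ⟪gradient g b - μ • b, a - b⟫ = -⟪gradient g b - μ • b, b - a⟫ := by
    rw [← inner_neg_right]; congr 1; abel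
  rw [e2] at e1
  have e3 : ⟪gradient g b - μ • b, b - a⟫ - ⟪gradient g a - μ • a, b - a⟫
      = ⟪gradient g b - gradient g a, b - a⟫ - μ * ‖b - a‖ ^ 2 := by
    rw [← inner_sub_left]
    have : gradient g b - μ • b - (gradient g a - μ • a)
        = (gradient g b - gradient g a) - μ • (b - a) := by
      rw [smul_sub]; abel
    rw [this, inner_sub_left, real_inner_smul_left, real_inner_self_eq_norm_sq]
  linarith

end AuxConvex

noncomputable section AuxGrad
variable {E : Type*} [NormedAddCommGroup E] [InnerProductSpace ℝ E] [CompleteSpace E]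

lemma hasGradientAt_finset_sum {ι : Type*} (s : Finset ι) (f : ι → E → ℝ) (F : ι → E) (x : E)
    (h : ∀ i ∈ s, HasGradientAt (f i) (F i) x) :
    HasGradientAt (fun w => ∑ i ∈ s, f i w) (∑ i ∈ s, F i) x := by
  rw [hasGradientAt_iff_hasFDerivAt]
  have hf := HasFDerivAt.sum (fun i hi => hasGradientAt_iff_hasFDerivAt.mp (h i hi))
  rw [← Finset.sum_fn]
  refine hf.congr_fderiv ?_
  simp [map_sum]

lemma hasGradientAt_const_mul (c : ℝ) {f : E → ℝ} {F x : E} (h : HasGradientAt f F x) :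
    HasGradientAt (fun w => c * f w) (c • F) x := by
  rw [hasGradientAt_iff_hasFDerivAt] at *
  have := h.const_mul c
  refine this.congr_fderiv ?_
  ext y
  simp [InnerProductSpace.toDual_apply_apply, real_inner_smul_left]

end AuxGrad

section AuxMarg
open Finset

lemma marg_sum {N : ℕ} (q : Fin N → ℕ) (n : Fin N) (F : Fin (q n) → ℝ) :
    ∑ i : (∀ m, Fin (q m)), F (i n)
      = (∏ m ∈ univ.erase n, (q m : ℝ)) * ∑ j, F j := by
  classical
  have h1 : ∑ i : (∀ m, Fin (q m)), F (i n) = ∑ x : Fin (q n) × (∀ j : {j // j ≠ n}, Fin (q j)),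
      F (((Equiv.piSplitAt n (fun m => Fin (q m))).symm x) n) :=
    (Equiv.sum_comp (Equiv.piSplitAt n (fun m => Fin (q m))).symm (fun i => F (i n))).symm
  have h2 : ∀ x : Fin (q n) × (∀ j : {j // j ≠ n}, Fin (q j)),
      ((Equiv.piSplitAt n (fun m => Fin (q m))).symm x) n = x.1 := by
    intro x
    simp [Equiv.piSplitAt]
  rw [h1]
  simp_rw [h2]
  rw [Fintype.sum_prod_type]
  simp only [Finset.sum_const, Finset.card_univ, nsmul_eq_mul]
  rw [← Finset.mul_sum]
  have hcard : ((Fintype.card ((j : {j // j ≠ n}) → Fin (q j)) : ℕ) : ℝ)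
      = ∏ m ∈ univ.erase n, (q m : ℝ) := by
    rw [Fintype.card_pi]
    push_cast
    rw [Finset.prod_subtype (univ.erase n) (p := fun m => m ≠ n) (by simp)]
    · simp
    · infer_instance
  rw [hcard]

lemma marg_avg {N : ℕ} (q : Fin N → ℕ) (hq : ∀ m, 0 < q m) (n : Fin N) (F : Fin (q n) → ℝ) :
    (∏ m, (q m : ℝ))⁻¹ * ∑ i : (∀ m, Fin (q m)), F (i n)
      = (q n : ℝ)⁻¹ * ∑ j, F j := by
  rw [marg_sum]
  have hsplit : (∏ m, (q m : ℝ)) = (q n : ℝ) * ∏ m ∈ univ.erase n, (q m : ℝ) :=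
    (Finset.mul_prod_erase univ _ (mem_univ n)).symm
  have h1 : (0:ℝ) < ∏ m ∈ univ.erase n, (q m : ℝ) :=
    Finset.prod_pos fun m _ => by exact_mod_cast hq m
  have h2 : (0:ℝ) < (q n : ℝ) := by exact_mod_cast hq n
  rw [hsplit, mul_inv]
  field_simp

lemma sum_const_pi {N : ℕ} (q : Fin N → ℕ) (c : ℝ) :
    ∑ _i : (∀ m, Fin (q m)), c = (∏ m, (q m : ℝ)) * c := by
  rw [Finset.sum_const, Finset.card_univ, Fintype.card_pi]
  simp [nsmul_eq_mul]

lemma avg_const_pi {N : ℕ} (q : Fin N → ℕ) (hq : ∀ m, 0 < q m) (c : ℝ) :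
    (∏ m, (q m : ℝ))⁻¹ * ∑ _i : (∀ m, Fin (q m)), c = c := by
  rw [sum_const_pi, ← mul_assoc, inv_mul_cancel₀, one_mul]
  exact ne_of_gt (Finset.prod_pos fun m _ => by exact_mod_cast hq m)

end AuxMarg

noncomputable section AuxBlock

def bip {N p : ℕ} (a b : Fin N → Evec p) : ℝ := ∑ n, ⟪a n, b n⟫

def mulB {N p : ℕ} (M : Matrix (Fin N) (Fin N) ℝ) (a : Fin N → Evec p) : Fin N → Evec p :=
  fun n => ∑ m, M n m • a m

lemma sum_rot {α β γ : Type*} [Fintype α] [Fintype β] [Fintype γ] (F : α → β → γ → ℝ) :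
    ∑ n : α, ∑ m : β, ∑ t : γ, F n m t = ∑ t : γ, ∑ n : α, ∑ m : β, F n m t := by
  have h1 : ∀ n, ∑ m : β, ∑ t : γ, F n m t = ∑ t : γ, ∑ m : β, F n m t :=
    fun n => Finset.sum_comm
  simp_rw [h1]
  exact Finset.sum_comm

variable {N p : ℕ} {M M' : Matrix (Fin N) (Fin N) ℝ}

lemma bip_comm (a b : Fin N → Evec p) : bip a b = bip b a := by
  unfold bip
  exact Finset.sum_congr rfl fun n _ => real_inner_comm _ _

lemma bip_self (a : Fin N → Evec p) : bip a a = sqnormB a := by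
  unfold bip sqnormB
  exact Finset.sum_congr rfl fun n _ => real_inner_self_eq_norm_sq _

lemma quadForm_eq_bip (M : Matrix (Fin N) (Fin N) ℝ) (a : Fin N → Evec p) :
    quadForm M a = bip a (mulB M a) := rfl

lemma bip_sub_left (a b c : Fin N → Evec p) :
    bip (fun n => a n - b n) c = bip a c - bip b c := by
  unfold bip
  rw [← Finset.sum_sub_distrib]
  exact Finset.sum_congr rfl fun n _ => inner_sub_left _ _ _

lemma bip_sub_right (a b c : Fin N → Evec p) :
    bip a (fun n => b n - c n) = bip a b - bip a c := by
  unfold bip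
  rw [← Finset.sum_sub_distrib]
  exact Finset.sum_congr rfl fun n _ => inner_sub_right _ _ _

lemma bip_add_right (a b c : Fin N → Evec p) :
    bip a (fun n => b n + c n) = bip a b + bip a c := by
  unfold bip
  rw [← Finset.sum_add_distrib]
  exact Finset.sum_congr rfl fun n _ => inner_add_right _ _ _

lemma bip_smul_right (r : ℝ) (a b : Fin N → Evec p) :
    bip a (fun n => r • b n) = r * bip a b := by
  unfold bip
  rw [Finset.mul_sum]
  exact Finset.sum_congr rfl fun n _ => real_inner_smul_right _ _ _

lemma bip_smul_left (r : ℝ) (a b : Fin N → Evec p) :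
    bip (fun n => r • a n) b = r * bip a b := by
  rw [bip_comm, bip_smul_right, bip_comm]

lemma bip_expand (M : Matrix (Fin N) (Fin N) ℝ) (a b : Fin N → Evec p) :
    bip a (mulB M b) = ∑ n, ∑ m, M n m * ⟪a n, b m⟫ := by
  unfold bip mulB
  apply Finset.sum_congr rfl; intro n _
  rw [inner_sum]
  exact Finset.sum_congr rfl fun m _ => real_inner_smul_right _ _ _

lemma bip_mulB_symm (hM : M.IsSymm) (a b : Fin N → Evec p) :
    bip (mulB M a) b = bip a (mulB M b) := by
  rw [bip_comm, bip_expand, bip_expand]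
  rw [Finset.sum_comm]
  apply Finset.sum_congr rfl; intro n _
  apply Finset.sum_congr rfl; intro m _
  rw [real_inner_comm, hM.apply m n]

lemma mulB_mul (M M' : Matrix (Fin N) (Fin N) ℝ) (a : Fin N → Evec p) :
    mulB (M * M') a = mulB M (mulB M' a) := by
  funext n
  simp only [mulB, Matrix.mul_apply, Finset.sum_smul, Finset.smul_sum, smul_smul]
  rw [Finset.sum_comm]

lemma mulB_sub_mat (M M' : Matrix (Fin N) (Fin N) ℝ) (a : Fin N → Evec p) :
    mulB (M - M') a = fun n => mulB M a n - mulB M' a n := by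
  funext n
  simp [mulB, sub_smul, Finset.sum_sub_distrib]

lemma mulB_sub_vec (M : Matrix (Fin N) (Fin N) ℝ) (a b : Fin N → Evec p) :
    mulB M (fun n => a n - b n) = fun n => mulB M a n - mulB M b n := by
  funext n
  simp [mulB, smul_sub, Finset.sum_sub_distrib]

lemma mulB_rowsum_zero (h : M.mulVec (fun _ => (1:ℝ)) = 0) (w : Evec p) :
    mulB M (fun _ => w) = fun _ => (0 : Evec p) := by
  funext n
  have hn : ∑ m, M n m = 0 := by
    have := congrFun h n
    simpa [Matrix.mulVec, dotProduct] using this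
  simp [mulB, ← Finset.sum_smul, hn]

lemma quadForm_nonneg (hM : M.PosSemidef) (a : Fin N → Evec p) : 0 ≤ quadForm M a := by
  rw [quadForm_eq_bip, bip_expand]
  have e1 : ∀ n m : Fin N, (M n m * ⟪a n, a m⟫) = ∑ t, M n m * (a n t * a m t) := by
    intro n m
    rw [PiLp.inner_apply, Finset.mul_sum]
    exact Finset.sum_congr rfl fun t _ => by simp [RCLike.inner_apply, mul_comm]
  simp_rw [e1]
  rw [sum_rot]
  apply Finset.sum_nonneg
  intro t _
  set u : Fin N → ℝ := fun n => a n t with hu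
  have hpsd := hM.dotProduct_mulVec_nonneg u
  have h2 : dotProduct (star u) (M.mulVec u)
      = ∑ n, ∑ m, M n m * (a n t * a m t) := by
    simp only [dotProduct, Matrix.mulVec, star_trivial, Pi.star_apply]
    apply Finset.sum_congr rfl; intro n _
    rw [Finset.mul_sum]
    apply Finset.sum_congr rfl; intro m _
    simp only [hu]
    ring
  rw [h2] at hpsd
  exact hpsd

lemma quadForm_sub_mat (M M' : Matrix (Fin N) (Fin N) ℝ) (a : Fin N → Evec p) :
    quadForm (M - M') a = quadForm M a - quadForm M' a := by
  rw [quadForm_eq_bip, mulB_sub_mat, bip_sub_right]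
  rfl

lemma quadForm_one (a : Fin N → Evec p) : quadForm (1 : Matrix (Fin N) (Fin N) ℝ) a = sqnormB a := by
  unfold quadForm sqnormB
  apply Finset.sum_congr rfl; intro n _
  have : ∑ m, (1 : Matrix (Fin N) (Fin N) ℝ) n m • a m = a n := by
    simp [Matrix.one_apply, ite_smul]
  rw [this, real_inner_self_eq_norm_sq]

lemma quadForm_smul_mat (r : ℝ) (M : Matrix (Fin N) (Fin N) ℝ) (a : Fin N → Evec p) :
    quadForm (r • M) a = r * quadForm M a := by
  unfold quadForm
  rw [Finset.mul_sum]
  apply Finset.sum_congr rfl; intro n _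
  rw [← real_inner_smul_right, Finset.smul_sum]
  congr 1
  apply Finset.sum_congr rfl; intro m _
  simp [smul_smul]

lemma quadForm_sub_smul_one (r : ℝ) (M : Matrix (Fin N) (Fin N) ℝ) (a : Fin N → Evec p) :
    quadForm (M - r • (1 : Matrix (Fin N) (Fin N) ℝ)) a = quadForm M a - r * sqnormB a := by
  rw [quadForm_sub_mat, quadForm_smul_mat, quadForm_one]

lemma quadForm_sub_poly (hM : M.IsSymm) (a b : Fin N → Evec p) :
    quadForm M (fun n => a n - b n)
      = quadForm M a - 2 * bip a (mulB M b) + quadForm M b := by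
  rw [quadForm_eq_bip, mulB_sub_vec, bip_sub_left]
  rw [bip_sub_right, bip_sub_right]
  have h1 : bip b (mulB M a) = bip a (mulB M b) := by
    rw [← bip_mulB_symm hM, bip_comm]
  rw [h1, ← quadForm_eq_bip, ← quadForm_eq_bip]
  ring

lemma sqnormB_nonneg (a : Fin N → Evec p) : 0 ≤ sqnormB a :=
  Finset.sum_nonneg fun n _ => sq_nonneg _

lemma bip_add_left {N p : ℕ} (a b c : Fin N → Evec p) :
    bip (fun n => a n + b n) c = bip a c + bip b c := by
  unfold bip
  rw [← Finset.sum_add_distrib]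
  exact Finset.sum_congr rfl fun n _ => inner_add_left _ _ _

lemma mulB_add_vec {N p : ℕ} (M : Matrix (Fin N) (Fin N) ℝ) (a b : Fin N → Evec p) :
    mulB M (fun n => a n + b n) = fun n => mulB M a n + mulB M b n := by
  funext n
  simp [mulB, smul_add, Finset.sum_add_distrib]

lemma mulB_add_mat {N p : ℕ} (M M' : Matrix (Fin N) (Fin N) ℝ) (a : Fin N → Evec p) :
    mulB (M + M') a = fun n => mulB M a n + mulB M' a n := by
  funext n
  simp [mulB, add_smul, Finset.sum_add_distrib]

lemma mulB_smul_mat {N p : ℕ} (r : ℝ) (M : Matrix (Fin N) (Fin N) ℝ) (a : Fin N → Evec p) :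
    mulB (r • M) a = fun n => r • mulB M a n := by
  funext n
  simp [mulB, smul_smul, Finset.smul_sum]

lemma mulB_one_vec {N p : ℕ} (a : Fin N → Evec p) :
    mulB (1 : Matrix (Fin N) (Fin N) ℝ) a = a := by
  funext n
  simp [mulB, Matrix.one_apply, ite_smul]

lemma mulB_rowsum_one {N p : ℕ} {M : Matrix (Fin N) (Fin N) ℝ}
    (h : M.mulVec (fun _ => (1:ℝ)) = fun _ => (1:ℝ)) (w : Evec p) :
    mulB M (fun _ => w) = fun _ => w := by
  funext n
  have hn : ∑ m, M n m = 1 := by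
    have := congrFun h n
    simpa [Matrix.mulVec, dotProduct] using this
  simp [mulB, ← Finset.sum_smul, hn]

lemma sqnormB_sub {N p : ℕ} (a b : Fin N → Evec p) :
    sqnormB (fun n => a n - b n) = sqnormB a - 2 * bip a b + sqnormB b := by
  rw [← bip_self, bip_sub_left, bip_sub_right, bip_sub_right, ← bip_self, ← bip_self,
    bip_comm b a]
  ring

end AuxBlock

set_option maxHeartbeats 3200000

/-- **Lemma 3 of the DSA paper.**  All matrices act blockwise (they are the
`N × N` factors of the extended matrices `Z = W ⊗ I`, `Z̃ = W̃ ⊗ I`,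
`U = (Z̃ − Z)^{1/2} = Us ⊗ I`).  Under Assumption 1 on the weight matrices and
strong convexity / Lipschitz-gradient assumptions on the local instantaneous
functions, the DSA primal-dual update
`x⁺(i) = x − α ĝ(i) − (I − Z̃)x − U v`, `v⁺(i) = v + U x⁺(i)` satisfies, for any
`η > 0`,
`E_i ‖u⁺(i) − u*‖²_G ≤ ‖u − u*‖²_G − 2 E_i ‖x⁺(i) − x*‖²_{I+Z−2Z̃} + (4αL/η) p(y)
  − E_i ‖x⁺(i) − x‖²_{Z̃−2αηI} − E_i ‖v⁺(i) − v‖² − (4αμ/L − 2α(2L−μ)/η) (f(x) − f(x*) − ⟨∇f(x*), x−x*⟩)`,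
where `‖u − u*‖²_G = ‖x − x*‖²_{Z̃} + ‖v − v*‖²` and `E_i` is the uniform average
over joint index choices. -/
theorem dsa_lemma3_descent
    {N p : ℕ} {q : Fin N → ℕ} (hq : ∀ n, 0 < q n)
    (μ L : ℝ) (hμ : 0 < μ) (hμL : μ ≤ L)
    (f : (n : Fin N) → Fin (q n) → Evec p → ℝ)
    (hdiff : ∀ n i, Differentiable ℝ (f n i))
    (hsc : ∀ n i, StrongConvexOn Set.univ μ (f n i))
    (hlip : ∀ n i a b, ‖gradient (f n i) a - gradient (f n i) b‖ ≤ L * ‖a - b‖)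
    (W Wt Us : Matrix (Fin N) (Fin N) ℝ)
    (hWsym : W.IsSymm) (hWtsym : Wt.IsSymm)
    (hnullW : ∀ v : Fin N → ℝ,
      ((1 : Matrix (Fin N) (Fin N) ℝ) - W).mulVec v = 0 ↔ ∃ c : ℝ, v = fun _ => c)
    (hnulldiff : ∀ v : Fin N → ℝ, (Wt - W).mulVec v = 0 ↔ ∃ c : ℝ, v = fun _ => c)
    (hnullWt : ((1 : Matrix (Fin N) (Fin N) ℝ) - Wt).mulVec (fun _ => (1:ℝ)) = 0)
    (hord1 : (Wt - W).PosSemidef)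
    (hord2 : ((1 : Matrix (Fin N) (Fin N) ℝ) + W - (2:ℝ) • Wt).PosSemidef)
    (hWtpos : Wt.PosDef)
    (hUs : Us.PosSemidef) (hUs2 : Us * Us = Wt - W)
    (α η : ℝ) (hα : 0 < α) (hη : 0 < η)
    (xstar : Evec p)
    (hxstar : ∀ w, ∑ n, locf f n xstar ≤ ∑ n, locf f n w)
    (vstar : Fin N → Evec p)
    (hvstar : ∀ n, α • gradient (locf f n) xstar + ∑ m, Us n m • vstar m = 0)
    (x v : Fin N → Evec p)
    (y : (n : Fin N) → Fin (q n) → Evec p)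
    (xp vp : ((n : Fin N) → Fin (q n)) → Fin N → Evec p)
    (hxp : ∀ i n, xp i n = x n - α • hatg f x y n (i n)
        - (x n - ∑ m, Wt n m • x m) - ∑ m, Us n m • v m)
    (hvp : ∀ i n, vp i n = v n + ∑ m, Us n m • xp i m) :
    (∏ n, (q n : ℝ))⁻¹ * ∑ i : (n : Fin N) → Fin (q n),
        (quadForm Wt (fun n => xp i n - xstar) + sqnormB (fun n => vp i n - vstar n))
      ≤ (quadForm Wt (fun n => x n - xstar) + sqnormB (fun n => v n - vstar n))
        - 2 * ((∏ n, (q n : ℝ))⁻¹ * ∑ i : (n : Fin N) → Fin (q n),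
            quadForm ((1 : Matrix (Fin N) (Fin N) ℝ) + W - (2:ℝ) • Wt)
              (fun n => xp i n - xstar))
        + (4 * α * L / η) * ptbl f xstar y
        - (∏ n, (q n : ℝ))⁻¹ * ∑ i : (n : Fin N) → Fin (q n),
            quadForm (Wt - (2 * α * η) • (1 : Matrix (Fin N) (Fin N) ℝ))
              (fun n => xp i n - x n)
        - (∏ n, (q n : ℝ))⁻¹ * ∑ i : (n : Fin N) → Fin (q n),
            sqnormB (fun n => vp i n - v n)
        - (4 * α * μ / L - 2 * α * (2 * L - μ) / η) * optgap f xstar x := by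
  classical
  have hL0 : (0:ℝ) < L := lt_of_lt_of_le hμ hμL
  have hqR : ∀ n, (0:ℝ) < (q n : ℝ) := fun n => by exact_mod_cast hq n
  have hT0 : (0:ℝ) ≤ (∏ n, (q n : ℝ))⁻¹ :=
    inv_nonneg.mpr (le_of_lt (Finset.prod_pos fun n _ => hqR n))
  -- convex-analytic facts for the instantaneous functions
  have hconv : ∀ n i, ConvexOn ℝ Set.univ (f n i) := fun n i =>
    strongConvexOn_zero.mp ((hsc n i).mono hμ.le)
  have hbreg0 : ∀ n i (a b : Evec p), 0 ≤ f n i a - f n i b - ⟪gradient (f n i) b, a - b⟫ := by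
    intro n i a b
    have := grad_le_of_convex (f n i) (hdiff n i) (hconv n i) b a
    linarith
  have hbregUB : ∀ n i (a b : Evec p),
      f n i a - f n i b - ⟪gradient (f n i) b, a - b⟫ ≤ L/2 * ‖a - b‖^2 := by
    intro n i a b
    have := descent_lemma (f n i) (hdiff n i) L hL0.le (hlip n i) b a
    linarith
  have hcoco : ∀ n i (a b : Evec p),
      ‖gradient (f n i) a - gradient (f n i) b‖^2
        ≤ 2*L*(f n i a - f n i b - ⟪gradient (f n i) b, a - b⟫) :=
    fun n i a b => cocoercivity (f n i) (hdiff n i) (hconv n i) L hL0 (hlip n i) a b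
  have hmonoI : ∀ n i (a b : Evec p),
      μ * ‖b - a‖^2 ≤ ⟪gradient (f n i) b - gradient (f n i) a, b - a⟫ :=
    fun n i a b => strong_mono (f n i) (hdiff n i) μ (hsc n i) a b
  -- gradient of the local average
  have hlocgrad : ∀ n (w : Evec p),
      gradient (locf f n) w = (q n : ℝ)⁻¹ • ∑ j, gradient (f n j) w := by
    intro n w
    have h1 : HasGradientAt (locf f n) ((q n : ℝ)⁻¹ • ∑ j, gradient (f n j) w) w := by
      have hs := hasGradientAt_finset_sum univ (fun j => f n j)
        (fun j => gradient (f n j) w) w (fun j _ => ((hdiff n j) w).hasGradientAt)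
      exact hasGradientAt_const_mul ((q n : ℝ)⁻¹) hs
    exact h1.gradient
  -- per-node gap quantities
  set Dn : Fin N → ℝ := fun n =>
    locf f n (x n) - locf f n xstar - ⟪gradient (locf f n) xstar, x n - xstar⟫ with hDndef
  set pn : Fin N → ℝ := fun n => (q n : ℝ)⁻¹ * ∑ j,
    (f n j (y n j) - f n j xstar - ⟪gradient (f n j) xstar, y n j - xstar⟫) with hpndef
  have hopt : optgap f xstar x = ∑ n, Dn n := rfl
  have hptbl : ptbl f xstar y = ∑ n, pn n := rfl
  have hDnavg : ∀ n, Dn n = (q n:ℝ)⁻¹ * ∑ j,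
      (f n j (x n) - f n j xstar - ⟪gradient (f n j) xstar, x n - xstar⟫) := by
    intro n
    rw [hDndef]
    dsimp only
    rw [hlocgrad n xstar, real_inner_smul_left, sum_inner]
    unfold locf
    rw [Finset.sum_sub_distrib, Finset.sum_sub_distrib]
    ring
  have hDn0 : ∀ n, 0 ≤ Dn n := by
    intro n
    rw [hDnavg n]
    exact mul_nonneg (inv_nonneg.mpr (hqR n).le)
      (Finset.sum_nonneg fun j _ => hbreg0 n j (x n) xstar)
  have hpn0 : ∀ n, 0 ≤ pn n := by
    intro n
    exact mul_nonneg (inv_nonneg.mpr (hqR n).le)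
      (Finset.sum_nonneg fun j _ => hbreg0 n j (y n j) xstar)
  have hDnUB : ∀ n, Dn n ≤ L/2 * ‖x n - xstar‖^2 := by
    intro n
    rw [hDnavg n]
    have hsum : ∑ j, (f n j (x n) - f n j xstar - ⟪gradient (f n j) xstar, x n - xstar⟫)
        ≤ ∑ _j : Fin (q n), L/2 * ‖x n - xstar‖^2 :=
      Finset.sum_le_sum fun j _ => hbregUB n j (x n) xstar
    have hc : ∑ _j : Fin (q n), L/2 * ‖x n - xstar‖^2
        = (q n : ℝ) * (L/2 * ‖x n - xstar‖^2) := by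
      rw [Finset.sum_const, Finset.card_univ, Fintype.card_fin, nsmul_eq_mul]
    calc (q n:ℝ)⁻¹ * ∑ j, (f n j (x n) - f n j xstar - ⟪gradient (f n j) xstar, x n - xstar⟫)
        ≤ (q n:ℝ)⁻¹ * ((q n : ℝ) * (L/2 * ‖x n - xstar‖^2)) := by
          apply mul_le_mul_of_nonneg_left _ (inv_nonneg.mpr (hqR n).le)
          rw [← hc]; exact hsum
      _ = L/2 * ‖x n - xstar‖^2 := by
          rw [← mul_assoc, inv_mul_cancel₀ (ne_of_gt (hqR n)), one_mul]
  have hmonoLoc : ∀ n, μ * ‖x n - xstar‖^2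
      ≤ ⟪x n - xstar, gradient (locf f n) (x n) - gradient (locf f n) xstar⟫ := by
    intro n
    rw [real_inner_comm, hlocgrad n (x n), hlocgrad n xstar, ← smul_sub, ← Finset.sum_sub_distrib,
      real_inner_smul_left, sum_inner]
    have hsum : ∑ j : Fin (q n), μ * ‖x n - xstar‖^2
        ≤ ∑ j, ⟪gradient (f n j) (x n) - gradient (f n j) xstar, x n - xstar⟫ :=
      Finset.sum_le_sum fun j _ => hmonoI n j xstar (x n)
    have hc : ∑ _j : Fin (q n), μ * ‖x n - xstar‖^2 = (q n : ℝ) * (μ * ‖x n - xstar‖^2) := by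
      rw [Finset.sum_const, Finset.card_univ, Fintype.card_fin, nsmul_eq_mul]
    calc μ * ‖x n - xstar‖^2
        = (q n:ℝ)⁻¹ * ((q n : ℝ) * (μ * ‖x n - xstar‖^2)) := by
          rw [← mul_assoc, inv_mul_cancel₀ (ne_of_gt (hqR n)), one_mul]
      _ ≤ (q n:ℝ)⁻¹ * ∑ j, ⟪gradient (f n j) (x n) - gradient (f n j) xstar, x n - xstar⟫ := by
          apply mul_le_mul_of_nonneg_left _ (inv_nonneg.mpr (hqR n).le)
          rw [← hc]; exact hsum
  have hsumhatg : ∀ n, ∑ j, hatg f x y n j = ∑ j, gradient (f n j) (x n) := by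
    intro n
    unfold hatg
    rw [Finset.sum_add_distrib, Finset.sum_sub_distrib, Finset.sum_const, Finset.card_univ,
      Fintype.card_fin]
    have hns : (q n) • ((q n : ℝ)⁻¹ • ∑ j, gradient (f n j) (y n j))
        = ∑ j, gradient (f n j) (y n j) := by
      rw [← Nat.cast_smul_eq_nsmul ℝ, smul_smul, mul_inv_cancel₀ (ne_of_gt (hqR n)), one_smul]
    rw [hns]
    abel
  have hmean : ∀ n, (q n:ℝ)⁻¹ * ∑ j, ⟪x n - xstar, hatg f x y n j - gradient (locf f n) xstar⟫
      = ⟪x n - xstar, gradient (locf f n) (x n) - gradient (locf f n) xstar⟫ := by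
    intro n
    rw [← inner_sum, ← real_inner_smul_right]
    congr 1
    rw [Finset.sum_sub_distrib, hsumhatg n, Finset.sum_const, Finset.card_univ,
      Fintype.card_fin, smul_sub, hlocgrad n (x n)]
    congr 1
    rw [← Nat.cast_smul_eq_nsmul ℝ, smul_smul, inv_mul_cancel₀ (ne_of_gt (hqR n)), one_smul]
  have hsecond : ∀ n, (q n:ℝ)⁻¹ * ∑ j, ‖hatg f x y n j - gradient (locf f n) xstar‖^2
      ≤ 4*L*Dn n + 4*L*pn n := by
    intro n
    set Av : Fin (q n) → Evec p := fun j => gradient (f n j) (x n) - gradient (f n j) xstar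
      with hAv
    set Bv : Fin (q n) → Evec p := fun j => gradient (f n j) (y n j) - gradient (f n j) xstar
      with hBv
    set Sv : Evec p := ∑ j, Bv j with hSv
    set dv : Evec p := (q n:ℝ)⁻¹ • Sv with hdv
    have hdecomp : ∀ j, hatg f x y n j - gradient (locf f n) xstar = Av j - (Bv j - dv) := by
      intro j
      rw [hAv, hBv, hdv, hSv]
      dsimp only
      unfold hatg
      rw [hlocgrad n xstar, Finset.sum_sub_distrib, smul_sub]
      abel
    have hptw : ∀ j, ‖hatg f x y n j - gradient (locf f n) xstar‖^2
        ≤ 2*‖Av j‖^2 + 2*‖Bv j - dv‖^2 := by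
      intro j
      rw [hdecomp j]
      have habs := norm_sub_le (Av j) (Bv j - dv)
      nlinarith [sq_nonneg (‖Av j‖ - ‖Bv j - dv‖), norm_nonneg (Av j),
        norm_nonneg (Bv j - dv), norm_nonneg (Av j - (Bv j - dv))]
    have hvar : ∑ j, ‖Bv j - dv‖^2 ≤ ∑ j, ‖Bv j‖^2 := by
      have hexp : ∀ j : Fin (q n), ‖Bv j - dv‖^2 = ‖Bv j‖^2 - 2*⟪Bv j, dv⟫ + ‖dv‖^2 :=
        fun j => norm_sub_sq_real _ _
      have h1 : ∑ j, ⟪Bv j, dv⟫ = (q n:ℝ)⁻¹ * ‖Sv‖^2 := by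
        rw [← sum_inner, ← hSv, hdv, real_inner_smul_right, real_inner_self_eq_norm_sq]
      have h2 : ∑ _j : Fin (q n), ‖dv‖^2 = (q n:ℝ)⁻¹ * ‖Sv‖^2 := by
        have hdvn : ‖dv‖^2 = (q n:ℝ)⁻¹ * ((q n:ℝ)⁻¹ * ‖Sv‖^2) := by
          rw [hdv, norm_smul, Real.norm_eq_abs,
            abs_of_nonneg (inv_nonneg.mpr (hqR n).le), mul_pow]
          ring
        rw [Finset.sum_const, Finset.card_univ, Fintype.card_fin, nsmul_eq_mul, hdvn,
          ← mul_assoc, mul_inv_cancel₀ (ne_of_gt (hqR n)), one_mul]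
      calc ∑ j, ‖Bv j - dv‖^2 = ∑ j, (‖Bv j‖^2 - 2*⟪Bv j, dv⟫ + ‖dv‖^2) :=
            Finset.sum_congr rfl fun j _ => hexp j
        _ = ∑ j, ‖Bv j‖^2 - 2*((q n:ℝ)⁻¹ * ‖Sv‖^2) + (q n:ℝ)⁻¹ * ‖Sv‖^2 := by
            rw [Finset.sum_add_distrib, Finset.sum_sub_distrib, ← Finset.mul_sum, h1, h2]
        _ ≤ ∑ j, ‖Bv j‖^2 := by
            have hpos : 0 ≤ (q n:ℝ)⁻¹ * ‖Sv‖^2 := by positivity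
            linarith
    have hA2 : ∑ j, ‖Av j‖^2
        ≤ 2*L*∑ j, (f n j (x n) - f n j xstar - ⟪gradient (f n j) xstar, x n - xstar⟫) := by
      rw [Finset.mul_sum]
      exact Finset.sum_le_sum fun j _ => hcoco n j (x n) xstar
    have hB2 : ∑ j, ‖Bv j‖^2
        ≤ 2*L*∑ j, (f n j (y n j) - f n j xstar - ⟪gradient (f n j) xstar, y n j - xstar⟫) := by
      rw [Finset.mul_sum]
      exact Finset.sum_le_sum fun j _ => hcoco n j (y n j) xstar
    have hsum : ∑ j, ‖hatg f x y n j - gradient (locf f n) xstar‖^2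
        ≤ 4*L*∑ j, (f n j (x n) - f n j xstar - ⟪gradient (f n j) xstar, x n - xstar⟫)
          + 4*L*∑ j, (f n j (y n j) - f n j xstar - ⟪gradient (f n j) xstar, y n j - xstar⟫) := by
      calc ∑ j, ‖hatg f x y n j - gradient (locf f n) xstar‖^2
          ≤ ∑ j, (2*‖Av j‖^2 + 2*‖Bv j - dv‖^2) := Finset.sum_le_sum fun j _ => hptw j
        _ = 2*∑ j, ‖Av j‖^2 + 2*∑ j, ‖Bv j - dv‖^2 := by
            rw [Finset.sum_add_distrib, Finset.mul_sum, Finset.mul_sum]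
        _ ≤ _ := by linarith [hvar, hA2, hB2]
    have hmulq := mul_le_mul_of_nonneg_left hsum (inv_nonneg.mpr (hqR n).le)
    calc (q n:ℝ)⁻¹ * ∑ j, ‖hatg f x y n j - gradient (locf f n) xstar‖^2
        ≤ (q n:ℝ)⁻¹ * (4*L*∑ j, (f n j (x n) - f n j xstar
              - ⟪gradient (f n j) xstar, x n - xstar⟫)
            + 4*L*∑ j, (f n j (y n j) - f n j xstar
              - ⟪gradient (f n j) xstar, y n j - xstar⟫)) := hmulq
      _ = 4*L*Dn n + 4*L*pn n := by
          rw [hDnavg n, hpndef]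
          dsimp only
          ring
  -- matrix facts
  have hWtrow : Wt.mulVec (fun _ => (1:ℝ)) = fun _ => (1:ℝ) := by
    have h := hnullWt
    rw [Matrix.sub_mulVec, Matrix.one_mulVec] at h
    funext m
    have := congrFun h m
    simp only [Pi.sub_apply, Pi.zero_apply, sub_eq_zero] at this
    exact this.symm
  have hWrow : W.mulVec (fun _ => (1:ℝ)) = fun _ => (1:ℝ) := by
    have h := (hnullW (fun _ => (1:ℝ))).mpr ⟨1, rfl⟩
    rw [Matrix.sub_mulVec, Matrix.one_mulVec] at h
    funext m
    have := congrFun h m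
    simp only [Pi.sub_apply, Pi.zero_apply, sub_eq_zero] at this
    exact this.symm
  have hUsSymm : Us.IsSymm := by
    have := hUs.1
    rwa [Matrix.IsHermitian, Matrix.conjTranspose_eq_transpose_of_trivial] at this
  have hUsrow : Us.mulVec (fun _ => (1:ℝ)) = 0 := by
    have hUU : (Us * Us).mulVec (fun _ => (1:ℝ)) = 0 := by
      rw [hUs2, Matrix.sub_mulVec, hWtrow, hWrow]
      simp
    have hdot : dotProduct (Us.mulVec (fun _ => (1:ℝ))) (Us.mulVec (fun _ => (1:ℝ)))
        = 0 := by
      have h1 : dotProduct (fun _ => (1:ℝ)) ((Us * Us).mulVec (fun _ => (1:ℝ)))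
          = dotProduct (Us.mulVec (fun _ => (1:ℝ))) (Us.mulVec (fun _ => (1:ℝ))) := by
        rw [← Matrix.mulVec_mulVec, Matrix.dotProduct_mulVec]
        congr 1
        rw [← Matrix.mulVec_transpose, hUsSymm]
      rw [← h1, hUU]
      simp
    simp only [dotProduct] at hdot
    funext m
    have hterm : ∀ k, 0 ≤ Us.mulVec (fun _ => (1:ℝ)) k * Us.mulVec (fun _ => (1:ℝ)) k :=
      fun k => mul_self_nonneg _
    have h2 := (Finset.sum_eq_zero_iff_of_nonneg (fun k _ => hterm k)).mp hdot m (mem_univ m)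
    have h3 := mul_self_eq_zero.mp h2
    simpa using h3
  have hQMrow : ((1 : Matrix (Fin N) (Fin N) ℝ) + W - (2:ℝ) • Wt).mulVec (fun _ => (1:ℝ)) = 0 := by
    rw [Matrix.sub_mulVec, Matrix.add_mulVec, Matrix.one_mulVec, hWrow,
      Matrix.smul_mulVec, hWtrow]
    funext m
    simp
    norm_num
  -- the key per-sample identity
  have hE2 : ∀ i : (n : Fin N) → Fin (q n),
      quadForm Wt (fun n => xp i n - xstar) + sqnormB (fun n => vp i n - vstar n)
        = (quadForm Wt (fun n => x n - xstar) + sqnormB (fun n => v n - vstar n))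
          - 2 * quadForm ((1 : Matrix (Fin N) (Fin N) ℝ) + W - (2:ℝ) • Wt)
              (fun n => xp i n - xstar)
          - quadForm Wt (fun n => xp i n - x n)
          - sqnormB (fun n => vp i n - v n)
          - 2 * α * bip (fun n => xp i n - xstar)
              (fun n => hatg f x y n (i n) - gradient (locf f n) xstar) := by
    intro i
    have hA1 : ∀ n, α • hatg f x y n (i n) = mulB Wt x n - xp i n - mulB Us v n := by
      intro n
      rw [hxp i n]
      simp only [mulB]
      abel
    have hUsxp : mulB Us (xp i) = fun n => vp i n - v n := by
      funext n
      rw [hvp i n]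
      simp only [mulB]
      abel
    have hvst : ∀ n, mulB Us vstar n = -(α • gradient (locf f n) xstar) := by
      intro n
      have h3 := hvstar n
      rw [eq_neg_iff_add_eq_zero, add_comm]
      exact h3
    have hV1 : (fun n => α • (hatg f x y n (i n) - gradient (locf f n) xstar)
          + mulB Us (fun m => vp i m - vstar m) n)
        = (fun n => mulB Wt (fun m => x m - xp i m) n
          - mulB ((1 : Matrix (Fin N) (Fin N) ℝ) + W - (2:ℝ) • Wt)
              (fun m => xp i m - xstar) n) := by
      funext n
      have hl2 : mulB Us (vp i) n
          = mulB Us v n + (mulB Wt (xp i) n - mulB W (xp i) n) := by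
        have hvpe : vp i = fun m => v m + mulB Us (xp i) m := by
          funext m; rw [hvp i m]; rfl
        rw [hvpe, congrFun (mulB_add_vec Us v (mulB Us (xp i))) n, ← mulB_mul, hUs2,
          congrFun (mulB_sub_mat Wt W (xp i)) n]
      rw [smul_sub, congrFun (mulB_sub_vec Us (vp i) vstar) n, hl2, hvst n,
        congrFun (mulB_sub_vec Wt x (xp i)) n,
        congrFun (mulB_sub_vec ((1 : Matrix (Fin N) (Fin N) ℝ) + W - (2:ℝ) • Wt)
          (xp i) (fun _ => xstar)) n,
        congrFun (mulB_rowsum_zero hQMrow xstar) n,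
        congrFun (mulB_sub_mat ((1 : Matrix (Fin N) (Fin N) ℝ) + W) ((2:ℝ) • Wt) (xp i)) n,
        congrFun (mulB_add_mat (1 : Matrix (Fin N) (Fin N) ℝ) W (xp i)) n,
        congrFun (mulB_smul_mat (2:ℝ) Wt (xp i)) n,
        congrFun (mulB_one_vec (xp i)) n,
        hA1 n]
      module
    have hb := congrArg (bip (fun n => xp i n - xstar)) hV1
    rw [bip_add_right, bip_smul_right, ← bip_mulB_symm hUsSymm] at hb
    have hUe : mulB Us (fun n => xp i n - xstar) = fun n => vp i n - v n := by
      funext n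
      rw [congrFun (mulB_sub_vec Us (xp i) (fun _ => xstar)) n,
        congrFun (mulB_rowsum_zero hUsrow xstar) n, congrFun hUsxp n]
      simp
    rw [hUe] at hb
    have t4 : bip (fun n => vp i n - v n) (fun n => vp i n - vstar n)
        = (sqnormB (fun n => vp i n - v n) + sqnormB (fun n => vp i n - vstar n)
            - sqnormB (fun n => v n - vstar n))/2 := by
      have hss := sqnormB_sub (fun n => vp i n - v n) (fun n => vp i n - vstar n)
      have hrw : (fun n => (vp i n - v n) - (vp i n - vstar n)) = fun n => vstar n - v n := by
        funext n; abel
      rw [hrw] at hss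
      have hrev : sqnormB (fun n => vstar n - v n) = sqnormB (fun n => v n - vstar n) := by
        unfold sqnormB
        exact Finset.sum_congr rfl fun n _ => by rw [norm_sub_rev]
      rw [hrev] at hss
      linarith
    rw [bip_sub_right (fun n => xp i n - xstar) (mulB Wt (fun m => x m - xp i m))
        (mulB ((1 : Matrix (Fin N) (Fin N) ℝ) + W - (2:ℝ) • Wt) (fun m => xp i m - xstar)),
      ← quadForm_eq_bip] at hb
    have hxd : mulB Wt (fun m => x m - xp i m)
        = fun n => mulB Wt (fun m => x m - xstar) n - mulB Wt (fun m => xp i m - xstar) n := by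
      have h0 : (fun m => x m - xp i m) = fun m => (x m - xstar) - (xp i m - xstar) := by
        funext m; abel
      rw [h0, mulB_sub_vec]
    rw [hxd, bip_sub_right (fun n => xp i n - xstar) (mulB Wt (fun m => x m - xstar))
        (mulB Wt (fun m => xp i m - xstar)),
      ← quadForm_eq_bip] at hb
    have t9 : quadForm Wt (fun n => xp i n - x n)
        = quadForm Wt (fun n => xp i n - xstar)
          - 2*bip (fun n => xp i n - xstar) (mulB Wt (fun n => x n - xstar))
          + quadForm Wt (fun n => x n - xstar) := by
      have h0 : (fun n => xp i n - x n) = fun n => (xp i n - xstar) - (x n - xstar) := by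
        funext n; abel
      rw [h0]
      exact quadForm_sub_poly hWtsym _ _
    rw [t4] at hb
    linarith [hb, t9]
  -- averaged quantities
  have hLHSeq : (∏ n, (q n : ℝ))⁻¹ * ∑ i : (n : Fin N) → Fin (q n),
        (quadForm Wt (fun n => xp i n - xstar) + sqnormB (fun n => vp i n - vstar n))
      = (quadForm Wt (fun n => x n - xstar) + sqnormB (fun n => v n - vstar n))
        - 2 * ((∏ n, (q n : ℝ))⁻¹ * ∑ i : (n : Fin N) → Fin (q n),
            quadForm ((1 : Matrix (Fin N) (Fin N) ℝ) + W - (2:ℝ) • Wt) (fun n => xp i n - xstar))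
        - (∏ n, (q n : ℝ))⁻¹ * ∑ i : (n : Fin N) → Fin (q n),
            quadForm Wt (fun n => xp i n - x n)
        - (∏ n, (q n : ℝ))⁻¹ * ∑ i : (n : Fin N) → Fin (q n),
            sqnormB (fun n => vp i n - v n)
        - 2 * α * ((∏ n, (q n : ℝ))⁻¹ * ∑ i : (n : Fin N) → Fin (q n),
            bip (fun n => xp i n - xstar)
              (fun n => hatg f x y n (i n) - gradient (locf f n) xstar)) := by
    have h1 : ∑ i : (n : Fin N) → Fin (q n),
        (quadForm Wt (fun n => xp i n - xstar) + sqnormB (fun n => vp i n - vstar n))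
      = ∑ i : (n : Fin N) → Fin (q n),
        ((quadForm Wt (fun n => x n - xstar) + sqnormB (fun n => v n - vstar n))
          - 2 * quadForm ((1 : Matrix (Fin N) (Fin N) ℝ) + W - (2:ℝ) • Wt)
              (fun n => xp i n - xstar)
          - quadForm Wt (fun n => xp i n - x n)
          - sqnormB (fun n => vp i n - v n)
          - 2 * α * bip (fun n => xp i n - xstar)
              (fun n => hatg f x y n (i n) - gradient (locf f n) xstar)) :=
      Finset.sum_congr rfl fun i _ => hE2 i
    rw [h1, Finset.sum_sub_distrib, Finset.sum_sub_distrib, Finset.sum_sub_distrib,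
      Finset.sum_sub_distrib, ← Finset.mul_sum, ← Finset.mul_sum, Finset.sum_const,
      Finset.card_univ, Fintype.card_pi, nsmul_eq_mul]
    simp only [Fintype.card_fin]
    push_cast
    have hc : (∏ n, (q n:ℝ))⁻¹ * (∏ n, (q n:ℝ)) = 1 :=
      inv_mul_cancel₀ (ne_of_gt (Finset.prod_pos fun n _ => hqR n))
    linear_combination ((quadForm Wt (fun n => x n - xstar)
      + sqnormB (fun n => v n - vstar n))) * hc
  have hRHSd : (∏ n, (q n : ℝ))⁻¹ * ∑ i : (n : Fin N) → Fin (q n),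
        quadForm (Wt - (2 * α * η) • (1 : Matrix (Fin N) (Fin N) ℝ)) (fun n => xp i n - x n)
      = (∏ n, (q n : ℝ))⁻¹ * ∑ i : (n : Fin N) → Fin (q n),
          quadForm Wt (fun n => xp i n - x n)
        - (2 * α * η) * ((∏ n, (q n : ℝ))⁻¹ * ∑ i : (n : Fin N) → Fin (q n),
            sqnormB (fun n => xp i n - x n)) := by
    have h1 : ∑ i : (n : Fin N) → Fin (q n),
        quadForm (Wt - (2 * α * η) • (1 : Matrix (Fin N) (Fin N) ℝ)) (fun n => xp i n - x n)
      = ∑ i : (n : Fin N) → Fin (q n),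
        (quadForm Wt (fun n => xp i n - x n)
          - (2 * α * η) * sqnormB (fun n => xp i n - x n)) :=
      Finset.sum_congr rfl fun i _ => quadForm_sub_smul_one _ _ _
    rw [h1, Finset.sum_sub_distrib, ← Finset.mul_sum]
    ring
  have hMain : -(2 * α) * ((∏ n, (q n : ℝ))⁻¹ * ∑ i : (n : Fin N) → Fin (q n),
        bip (fun n => xp i n - xstar)
          (fun n => hatg f x y n (i n) - gradient (locf f n) xstar))
      ≤ 2 * α * η * ((∏ n, (q n : ℝ))⁻¹ * ∑ i : (n : Fin N) → Fin (q n),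
          sqnormB (fun n => xp i n - x n))
        + (4 * α * L / η) * ptbl f xstar y
        - (4 * α * μ / L - 2 * α * (2 * L - μ) / η) * optgap f xstar x := by
    -- split the inner product through x
    have hsplitBip : ∀ i : (n : Fin N) → Fin (q n),
        bip (fun n => xp i n - xstar)
            (fun n => hatg f x y n (i n) - gradient (locf f n) xstar)
          = bip (fun n => xp i n - x n)
              (fun n => hatg f x y n (i n) - gradient (locf f n) xstar)
            + bip (fun n => x n - xstar)
              (fun n => hatg f x y n (i n) - gradient (locf f n) xstar) := by
      intro i
      have h0 : (fun n => xp i n - xstar) = fun n => (xp i n - x n) + (x n - xstar) := by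
        funext n; abel
      rw [h0, bip_add_left]
    -- pointwise Young inequality
    have hYoung : ∀ i : (n : Fin N) → Fin (q n),
        -(2*α) * bip (fun n => xp i n - x n)
            (fun n => hatg f x y n (i n) - gradient (locf f n) xstar)
          ≤ 2*α*η * sqnormB (fun n => xp i n - x n)
            + (α/(2*η)) * sqnormB
                (fun n => hatg f x y n (i n) - gradient (locf f n) xstar) := by
      intro i
      unfold bip sqnormB
      rw [Finset.mul_sum, Finset.mul_sum, Finset.mul_sum, ← Finset.sum_add_distrib]
      apply Finset.sum_le_sum
      intro n _
      set dn := xp i n - x n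
      set gn := hatg f x y n (i n) - gradient (locf f n) xstar
      have hip : -⟪dn, gn⟫ ≤ ‖dn‖ * ‖gn‖ := by
        have h := real_inner_le_norm dn (-gn)
        rw [inner_neg_right, norm_neg] at h
        linarith
      have h4 : 0 ≤ (α/(2*η)) * (2*η*‖dn‖ - ‖gn‖)^2 := by positivity
      have h5 : (α/(2*η)) * (2*η*‖dn‖ - ‖gn‖)^2
          = 2*α*η*‖dn‖^2 - 2*α*(‖dn‖*‖gn‖) + (α/(2*η))*‖gn‖^2 := by
        field_simp
        ring
      have h6 : -(2*α) * ⟪dn, gn⟫ ≤ 2*α*(‖dn‖*‖gn‖) := by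
        have := mul_le_mul_of_nonneg_left hip (by positivity : (0:ℝ) ≤ 2*α)
        linarith
      linarith
    have hYoungSum : -(2*α) * ((∏ n, (q n : ℝ))⁻¹ * ∑ i : (n : Fin N) → Fin (q n),
          bip (fun n => xp i n - x n)
            (fun n => hatg f x y n (i n) - gradient (locf f n) xstar))
        ≤ 2*α*η * ((∏ n, (q n : ℝ))⁻¹ * ∑ i : (n : Fin N) → Fin (q n),
            sqnormB (fun n => xp i n - x n))
          + (α/(2*η)) * ((∏ n, (q n : ℝ))⁻¹ * ∑ i : (n : Fin N) → Fin (q n),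
              sqnormB (fun n => hatg f x y n (i n) - gradient (locf f n) xstar)) := by
      have hsum := Finset.sum_le_sum fun i (_ : i ∈ univ) => hYoung i
      rw [Finset.sum_add_distrib, ← Finset.mul_sum, ← Finset.mul_sum, ← Finset.mul_sum] at hsum
      have := mul_le_mul_of_nonneg_left hsum hT0
      calc -(2*α) * ((∏ n, (q n : ℝ))⁻¹ * ∑ i : (n : Fin N) → Fin (q n),
            bip (fun n => xp i n - x n)
              (fun n => hatg f x y n (i n) - gradient (locf f n) xstar))
          = (∏ n, (q n : ℝ))⁻¹ * (-(2*α) * ∑ i : (n : Fin N) → Fin (q n),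
              bip (fun n => xp i n - x n)
                (fun n => hatg f x y n (i n) - gradient (locf f n) xstar)) := by ring
        _ ≤ (∏ n, (q n : ℝ))⁻¹ * (2*α*η * ∑ i : (n : Fin N) → Fin (q n),
              sqnormB (fun n => xp i n - x n)
            + (α/(2*η)) * ∑ i : (n : Fin N) → Fin (q n),
                sqnormB (fun n => hatg f x y n (i n) - gradient (locf f n) xstar)) := this
        _ = _ := by ring
    -- expectation of the x-part of the inner product
    have hMarg : ∀ (F : (n : Fin N) → Fin (q n) → ℝ),
        (∏ n, (q n : ℝ))⁻¹ * ∑ i : (n : Fin N) → Fin (q n), ∑ n, F n (i n)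
          = ∑ n, (q n : ℝ)⁻¹ * ∑ j, F n j := by
      intro F
      rw [Finset.sum_comm, Finset.mul_sum]
      exact Finset.sum_congr rfl fun n _ => marg_avg q hq n (F n)
    have hMeanSum : (2*μ/L) * (∑ n, Dn n)
        ≤ (∏ n, (q n : ℝ))⁻¹ * ∑ i : (n : Fin N) → Fin (q n),
            bip (fun n => x n - xstar)
              (fun n => hatg f x y n (i n) - gradient (locf f n) xstar) := by
      have he : (∏ n, (q n : ℝ))⁻¹ * ∑ i : (n : Fin N) → Fin (q n),
            bip (fun n => x n - xstar)
              (fun n => hatg f x y n (i n) - gradient (locf f n) xstar)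
          = ∑ n, (q n : ℝ)⁻¹ * ∑ j,
              ⟪x n - xstar, hatg f x y n j - gradient (locf f n) xstar⟫ := by
        have hb : ∀ i : (n : Fin N) → Fin (q n),
            bip (fun n => x n - xstar)
              (fun n => hatg f x y n (i n) - gradient (locf f n) xstar)
            = ∑ n, ⟪x n - xstar, hatg f x y n (i n) - gradient (locf f n) xstar⟫ :=
          fun i => rfl
        rw [Finset.sum_congr rfl fun i _ => hb i]
        exact hMarg (fun n j => ⟪x n - xstar, hatg f x y n j - gradient (locf f n) xstar⟫)
      rw [he, Finset.mul_sum]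
      apply Finset.sum_le_sum
      intro n _
      rw [hmean n]
      have h1 := hmonoLoc n
      have h2 := mul_le_mul_of_nonneg_left (hDnUB n)
        (by positivity : (0:ℝ) ≤ 2*μ/L)
      have h3 : 2*μ/L * (L/2 * ‖x n - xstar‖^2) = μ * ‖x n - xstar‖^2 := by
        field_simp
      linarith
    have hVarSum : (∏ n, (q n : ℝ))⁻¹ * ∑ i : (n : Fin N) → Fin (q n),
          sqnormB (fun n => hatg f x y n (i n) - gradient (locf f n) xstar)
        ≤ ∑ n, (4*L*Dn n + 4*L*pn n) := by
      have he : (∏ n, (q n : ℝ))⁻¹ * ∑ i : (n : Fin N) → Fin (q n),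
            sqnormB (fun n => hatg f x y n (i n) - gradient (locf f n) xstar)
          = ∑ n, (q n : ℝ)⁻¹ * ∑ j,
              ‖hatg f x y n j - gradient (locf f n) xstar‖^2 := by
        have hb : ∀ i : (n : Fin N) → Fin (q n),
            sqnormB (fun n => hatg f x y n (i n) - gradient (locf f n) xstar)
            = ∑ n, ‖hatg f x y n (i n) - gradient (locf f n) xstar‖^2 := fun i => rfl
        rw [Finset.sum_congr rfl fun i _ => hb i]
        exact hMarg (fun n j => ‖hatg f x y n j - gradient (locf f n) xstar‖^2)
      rw [he]
      exact Finset.sum_le_sum fun n _ => hsecond n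
    -- combine everything
    have hsplitSum : (∏ n, (q n : ℝ))⁻¹ * ∑ i : (n : Fin N) → Fin (q n),
          bip (fun n => xp i n - xstar)
            (fun n => hatg f x y n (i n) - gradient (locf f n) xstar)
        = (∏ n, (q n : ℝ))⁻¹ * ∑ i : (n : Fin N) → Fin (q n),
            bip (fun n => xp i n - x n)
              (fun n => hatg f x y n (i n) - gradient (locf f n) xstar)
          + (∏ n, (q n : ℝ))⁻¹ * ∑ i : (n : Fin N) → Fin (q n),
              bip (fun n => x n - xstar)
                (fun n => hatg f x y n (i n) - gradient (locf f n) xstar) := by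
      rw [Finset.sum_congr rfl fun i _ => hsplitBip i, Finset.sum_add_distrib]
      ring
    rw [hopt, hptbl]
    set PP := ∑ n, pn n with hPP
    set DD := ∑ n, Dn n with hDD
    have hPP0 : 0 ≤ PP := Finset.sum_nonneg fun n _ => hpn0 n
    have hDD0 : 0 ≤ DD := Finset.sum_nonneg fun n _ => hDn0 n
    have hVar' : (∏ n, (q n : ℝ))⁻¹ * ∑ i : (n : Fin N) → Fin (q n),
          sqnormB (fun n => hatg f x y n (i n) - gradient (locf f n) xstar)
        ≤ 4*L*DD + 4*L*PP := by
      have : ∑ n, (4*L*Dn n + 4*L*pn n) = 4*L*DD + 4*L*PP := by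
        rw [Finset.sum_add_distrib, hDD, hPP, ← Finset.mul_sum, ← Finset.mul_sum]
      linarith [hVarSum, this.le, this.ge]
    have e3 : (α/(2*η)) * ((∏ n, (q n : ℝ))⁻¹ * ∑ i : (n : Fin N) → Fin (q n),
          sqnormB (fun n => hatg f x y n (i n) - gradient (locf f n) xstar))
        ≤ (α/(2*η)) * (4*L*DD + 4*L*PP) :=
      mul_le_mul_of_nonneg_left hVar' (by positivity)
    have e4 : -(2*α) * ((∏ n, (q n : ℝ))⁻¹ * ∑ i : (n : Fin N) → Fin (q n),
          bip (fun n => x n - xstar)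
            (fun n => hatg f x y n (i n) - gradient (locf f n) xstar))
        ≤ -(2*α) * ((2*μ/L) * DD) := by
      have := mul_le_mul_of_nonpos_left hMeanSum
        (by nlinarith : -(2*α) ≤ 0)
      linarith
    have e5 : (α/(2*η)) * (4*L*DD + 4*L*PP)
        = (2*α*L/η)*DD + (2*α*L/η)*PP := by
      field_simp
      ring
    have e6 : (2*α*L/η)*PP ≤ (4*α*L/η)*PP := by
      apply mul_le_mul_of_nonneg_right _ hPP0
      gcongr
      linarith
    have e7 : (2*α*L/η)*DD ≤ (2*α*(2*L-μ)/η)*DD := by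
      apply mul_le_mul_of_nonneg_right _ hDD0
      gcongr
      linarith
    have e8 : -(2*α) * ((2*μ/L) * DD) = -(4*α*μ/L)*DD := by ring
    have e9 : (4 * α * μ / L - 2 * α * (2 * L - μ) / η) * DD
        = (4*α*μ/L)*DD - (2*α*(2*L-μ)/η)*DD := by ring
    have hsplit' : -(2*α) * ((∏ n, (q n : ℝ))⁻¹ * ∑ i : (n : Fin N) → Fin (q n),
          bip (fun n => xp i n - xstar)
            (fun n => hatg f x y n (i n) - gradient (locf f n) xstar))
        = -(2*α) * ((∏ n, (q n : ℝ))⁻¹ * ∑ i : (n : Fin N) → Fin (q n),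
            bip (fun n => xp i n - x n)
              (fun n => hatg f x y n (i n) - gradient (locf f n) xstar))
          + -(2*α) * ((∏ n, (q n : ℝ))⁻¹ * ∑ i : (n : Fin N) → Fin (q n),
              bip (fun n => x n - xstar)
                (fun n => hatg f x y n (i n) - gradient (locf f n) xstar)) := by
      rw [hsplitSum]
      ring
    linarith [hYoungSum, hsplit', e3, e4, e5, e6, e7, e8, e9]
  rw [hLHSeq, hRHSd]
  linarith [hMain]
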